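/- Let λ > 1 and a, b ∈ ℝⁿ with a ≠ b. Let G be the group generated by f(x) = λ(x - a) + a and g(x) = λ(x - b) + b. Then the closure of the orbit G(a) equals the affine line ℝ(b - a) + a. -/

import Mathlib

private lemma perm_inv_eq {V : Type*} (p : Equiv.Perm V) (q : V → V)
    (h : ∀ y, p (q y) = y) : ∀ y, p⁻¹ y = q y := by
  intro y
  conv_lhs => rw [← h y]
  exact Equiv.symm_apply_apply p (q y)

private lemma aff_inv {V : Type*} [AddCommGroup V] [Module ℝ V]
    (p : Equiv.Perm V) (m : ℝ) (hm : m ≠ 0) (c u : V)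
    (hp : ∀ x, p x = m • (x - c) + u) : ∀ y, p⁻¹ y = m⁻¹ • (y - u) + c := by
  refine perm_inv_eq p _ (fun y => ?_)
  rw [hp, add_sub_cancel_right, smul_smul, mul_inv_cancel₀ hm, one_smul, sub_add_cancel]

private lemma perm_pow_apply {V : Type*} [AddCommGroup V] [Module ℝ V]
    (p : Equiv.Perm V) (l : ℝ) (c : V) (hp : ∀ x, p x = l • (x - c) + c) :
    ∀ (k : ℕ) (x : V), (p ^ k) x = l ^ k • (x - c) + c := by
  intro k
  induction k with
  | zero => intro x; simp
  | succ k ih =>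
    intro x
    rw [pow_succ, Equiv.Perm.mul_apply, hp, ih]
    rw [add_sub_cancel_right, smul_smul, ← pow_succ]

private lemma perm_zpow_apply {V : Type*} [AddCommGroup V]
    (p : Equiv.Perm V) (v : V) (hp : ∀ x, p x = x + v) :
    ∀ (k : ℤ) (x : V), (p ^ k) x = x + k • v := by
  have hinv : ∀ x, p⁻¹ x = x - v := perm_inv_eq p (fun y => y - v)
    (fun y => by rw [hp, sub_add_cancel])
  intro k
  induction k using Int.induction_on with
  | zero => intro x; simp
  | succ k ih =>
    intro x
    rw [zpow_add_one, Equiv.Perm.mul_apply, ih, hp]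
    rw [add_smul, one_smul]
    abel
  | pred k ih =>
    intro x
    rw [zpow_sub_one, Equiv.Perm.mul_apply, hinv, ih]
    rw [sub_smul, one_smul]
    abel

theorem stmt_8 {n : ℕ} (l : ℝ) (hl : 1 < l) (a b : Fin n → ℝ) (hab : a ≠ b)
    (f g : Equiv.Perm (Fin n → ℝ))
    (hf : ∀ x, f x = l • (x - a) + a) (hg : ∀ x, g x = l • (x - b) + b)
    (G : Subgroup (Equiv.Perm (Fin n → ℝ))) (hG : G = Subgroup.closure {f, g}) :
    closure {y | ∃ h ∈ G, h a = y} = {y | ∃ t : ℝ, y = t • (b - a) + a} := by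
  have hl0 : (0:ℝ) < l := lt_trans one_pos hl
  have hlne : l ≠ 0 := ne_of_gt hl0
  set d : Fin n → ℝ := b - a with hd_def
  have hd : d ≠ 0 := sub_ne_zero.mpr (Ne.symm hab)
  have hfG : f ∈ G := by
    rw [hG]; exact Subgroup.subset_closure (by simp)
  have hgG : g ∈ G := by
    rw [hG]; exact Subgroup.subset_closure (by simp)
  have hfinv : ∀ y, f⁻¹ y = l⁻¹ • (y - a) + a := aff_inv f l hlne a a hf
  have hginv : ∀ y, g⁻¹ y = l⁻¹ • (y - b) + b := aff_inv g l hlne b b hg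
  apply subset_antisymm
  · -- closure of orbit ⊆ line
    have hLclosed : IsClosed {y : Fin n → ℝ | ∃ t : ℝ, y = t • (b - a) + a} := by
      have heq : {y : Fin n → ℝ | ∃ t : ℝ, y = t • (b - a) + a}
          = (fun v => v + a) '' ((Submodule.span ℝ {d} : Submodule ℝ (Fin n → ℝ)) : Set (Fin n → ℝ)) := by
        ext y
        constructor
        · rintro ⟨t, rfl⟩
          exact ⟨t • d, Submodule.smul_mem _ _ (Submodule.mem_span_singleton_self d), rfl⟩
        · rintro ⟨v, hv, rfl⟩
          obtain ⟨t, rfl⟩ := Submodule.mem_span_singleton.mp hv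
          exact ⟨t, rfl⟩
      rw [heq]
      exact (Homeomorph.addRight a).isClosedMap _
        (Submodule.closed_of_finiteDimensional _)
    refine closure_minimal ?_ hLclosed
    rintro y ⟨h, hhG, rfl⟩
    rw [hG] at hhG
    have key : (∀ t : ℝ, ∃ s : ℝ, h (t • d + a) = s • d + a) ∧
        (∀ t : ℝ, ∃ s : ℝ, h⁻¹ (t • d + a) = s • d + a) := by
      induction hhG using Subgroup.closure_induction with
      | mem x hx =>
        rcases hx with hx | hx
        · subst hx
          constructor
          · intro t
            refine ⟨l * t, ?_⟩
            rw [hf]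
            module
          · intro t
            refine ⟨l⁻¹ * t, ?_⟩
            rw [hfinv]
            module
        · simp only [Set.mem_singleton_iff] at hx
          subst hx
          constructor
          · intro t
            refine ⟨l * (t - 1) + 1, ?_⟩
            rw [hg, hd_def]
            module
          · intro t
            refine ⟨l⁻¹ * (t - 1) + 1, ?_⟩
            rw [hginv, hd_def]
            module
      | one => exact ⟨fun t => ⟨t, by simp⟩, fun t => ⟨t, by simp⟩⟩
      | mul x y hx hy ihx ihy =>
        constructor
        · intro t
          obtain ⟨s, hs⟩ := ihy.1 t
          obtain ⟨s', hs'⟩ := ihx.1 s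
          exact ⟨s', by rw [Equiv.Perm.mul_apply, hs, hs']⟩
        · intro t
          obtain ⟨s, hs⟩ := ihx.2 t
          obtain ⟨s', hs'⟩ := ihy.2 s
          refine ⟨s', ?_⟩
          rw [mul_inv_rev, Equiv.Perm.mul_apply, hs, hs']
      | inv x hx ih =>
        exact ⟨ih.2, by simpa using ih.1⟩
    obtain ⟨s, hs⟩ := key.1 0
    refine ⟨s, ?_⟩
    rw [← hs]
    congr 1
    simp
  · -- line ⊆ closure of orbit
    rintro y ⟨s, rfl⟩
    have hfn : ∀ (k : ℕ) (x : Fin n → ℝ), (f ^ k) x = l ^ k • (x - a) + a :=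
      perm_pow_apply f l a hf
    have hlkne : ∀ k : ℕ, (l : ℝ) ^ k ≠ 0 := fun k => pow_ne_zero _ hlne
    have hfninv : ∀ (k : ℕ) (y : Fin n → ℝ), ((f ^ k)⁻¹) y = (l ^ k)⁻¹ • (y - a) + a :=
      fun k => aff_inv (f ^ k) (l ^ k) (hlkne k) a a (hfn k)
    set c : ℕ → (Fin n → ℝ) := fun k => ((1 - l) * (l ^ k)⁻¹) • d with hc_def
    set e : ℕ → Equiv.Perm (Fin n → ℝ) := fun k => (f ^ k)⁻¹ * g * f ^ k with he_def
    have heG : ∀ k, e k ∈ G := fun k =>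
      mul_mem (mul_mem (inv_mem (pow_mem hfG k)) hgG) (pow_mem hfG k)
    have he : ∀ (k : ℕ) (x : Fin n → ℝ), e k x = l • (x - a) + (a + c k) := by
      intro k x
      have hk := hlkne k
      simp only [he_def, Equiv.Perm.mul_apply]
      rw [hfn k x, hg, hfninv k, hc_def, hd_def]
      match_scalars <;> field_simp <;> ring
    have heinv : ∀ (k : ℕ) (y : Fin n → ℝ), (e k)⁻¹ y = l⁻¹ • (y - (a + c k)) + a :=
      fun k => aff_inv (e k) l hlne a (a + c k) (he k)
    set t : ℕ → ℝ := fun k => -((l - 1) ^ 2 * (l ^ (k + 2))⁻¹) with ht_def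
    set w : ℕ → Equiv.Perm (Fin n → ℝ) := fun k => (e (k + 1))⁻¹ * e k with hw_def
    have hwG : ∀ k, w k ∈ G := fun k => mul_mem (inv_mem (heG (k + 1))) (heG k)
    have hw : ∀ (k : ℕ) (x : Fin n → ℝ), w k x = x + t k • d := by
      intro k x
      have hk := hlkne k
      have hk1 := hlkne (k + 1)
      have hk2 := hlkne (k + 2)
      simp only [hw_def, Equiv.Perm.mul_apply]
      rw [he k x, heinv (k + 1), hc_def, ht_def]
      match_scalars <;> field_simp <;> ring
    have horb : ∀ (k : ℕ) (m : ℤ), a + ((m : ℝ) * t k) • d ∈ {y | ∃ h ∈ G, h a = y} := by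
      intro k m
      refine ⟨(w k) ^ m, zpow_mem (hwG k) m, ?_⟩
      rw [perm_zpow_apply (w k) (t k • d) (hw k) m a,
        ← Int.cast_smul_eq_zsmul ℝ, smul_smul]
    rw [Metric.mem_closure_iff]
    intro ε hε
    have hdnorm : (0:ℝ) < ‖d‖ := norm_pos_iff.mpr hd
    obtain ⟨k, hk⟩ := pow_unbounded_of_one_lt ((l - 1) ^ 2 * ‖d‖ / ε) hl
    have hl1 : (0:ℝ) < l - 1 := by linarith
    have hpk : (0:ℝ) < l ^ k := pow_pos hl0 k
    have hpk2 : (0:ℝ) < l ^ (k + 2) := pow_pos hl0 _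
    have htkneg : t k < 0 := by
      rw [ht_def]
      have : 0 < (l - 1) ^ 2 * (l ^ (k + 2))⁻¹ :=
        mul_pos (pow_pos hl1 2) (inv_pos.mpr hpk2)
      linarith
    have htkne : t k ≠ 0 := ne_of_lt htkneg
    have habs : |t k| = (l - 1) ^ 2 * (l ^ (k + 2))⁻¹ := by
      rw [abs_of_neg htkneg, ht_def, neg_neg]
    have hsmall : |t k| * ‖d‖ < ε := by
      rw [habs]
      have h1 : (l - 1) ^ 2 * ‖d‖ < ε * l ^ k := by
        rw [div_lt_iff₀ hε] at hk
        linarith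
      have h2 : l ^ k ≤ l ^ (k + 2) := pow_le_pow_right₀ hl.le (by omega)
      have h3 : (l - 1) ^ 2 * ‖d‖ < ε * l ^ (k + 2) := by nlinarith
      have h4 : (l - 1) ^ 2 * (l ^ (k + 2))⁻¹ * ‖d‖ = (l - 1) ^ 2 * ‖d‖ / l ^ (k + 2) := by
        ring
      rw [h4, div_lt_iff₀ hpk2]
      linarith [h3]
    set m : ℤ := round (s / t k) with hm_def
    refine ⟨a + ((m : ℝ) * t k) • d, horb k m, ?_⟩
    have hdist : dist (s • d + a) (a + ((m : ℝ) * t k) • d) = |s - (m : ℝ) * t k| * ‖d‖ := by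
      rw [dist_eq_norm]
      have : s • d + a - (a + ((m : ℝ) * t k) • d) = (s - (m : ℝ) * t k) • d := by
        module
      rw [this, norm_smul, Real.norm_eq_abs]
    rw [hdist]
    have hclose : |s - (m : ℝ) * t k| ≤ |t k| * (1 / 2) := by
      have heq : s - (m : ℝ) * t k = t k * (s / t k - m) := by
        field_simp
      rw [heq, abs_mul]
      exact mul_le_mul_of_nonneg_left (abs_sub_round (s / t k)) (abs_nonneg _)
    calc |s - (m : ℝ) * t k| * ‖d‖ ≤ |t k| * (1/2) * ‖d‖ := by
          exact mul_le_mul_of_nonneg_right hclose hdnorm.le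
      _ ≤ |t k| * ‖d‖ := by nlinarith [abs_nonneg (t k)]
      _ < ε := hsmall
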